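/- Let X be a random state taking finitely many values, and conditional on X = x let A be drawn from μ(·|x) with μ(a|x) > 0. For the doubly-robust estimator Ẑ = (π(A|X)/μ(A|X))·(r(X,A) - Q(X,A)) + ∑_a π(a|X) Q(X,a), the law of total variance gives Var[Ẑ] = Var_X[V^π(X)] + E_X[ ‖π(·|X) r(X,·) - π(·|X) Q(X,·)‖²_{M_{μ(·|X)}} ], where V^π(x) = ∑_a π(a|x) r(x,a) and ‖v‖²_{M_μ} = ∑_a v(a)²/μ(a) - (∑_a v(a))². -/

import Mathlib

open BigOperators

/-- Expectation of `f A` for `A ~ μ` on `Fin K`. -/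
def expec {K : ℕ} (μ : Fin K → ℝ) (f : Fin K → ℝ) : ℝ := ∑ a, μ a * f a

/-- Variance of `f A` for `A ~ μ`. -/
def variance' {K : ℕ} (μ : Fin K → ℝ) (f : Fin K → ℝ) : ℝ :=
  expec μ (fun a => (f a - expec μ f) ^ 2)

/-- Squared seminorm `‖v‖²_{M_μ} = ∑ v(a)²/μ(a) - (∑ v(a))²`. -/
noncomputable def semiNormSq {K : ℕ} (μ : Fin K → ℝ) (v : Fin K → ℝ) : ℝ :=
  (∑ a, v a ^ 2 / μ a) - (∑ a, v a) ^ 2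

/-- Expectation over the joint law of `(X, A)` where `X ~ p` on `S`
and, conditionally on `X = x`, `A ~ μ x` on `Fin K`. -/
def jointExpec {S : Type*} [Fintype S] {K : ℕ} (p : S → ℝ)
    (μ : S → Fin K → ℝ) (h : S → Fin K → ℝ) : ℝ :=
  ∑ x, p x * ∑ a, μ x a * h x a

/-- law-of-total-variance decomposition for the DR estimator
over a random state `X ~ p` and action `A ~ μ(·|X)`:
`Var[Ẑ] = Var_X[V^π(X)] + E_X ‖π(·|X) r(X,·) - π(·|X) Q(X,·)‖²_{M_{μ(·|X)}}`. -/
theorem stmt_8 (S : Type*) [Fintype S] (K : ℕ) (hK : 1 ≤ K)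
    (p : S → ℝ) (hpnonneg : ∀ x, 0 ≤ p x) (hpsum : ∑ x, p x = 1)
    (μ π : S → Fin K → ℝ)
    (hμpos : ∀ x a, 0 < μ x a) (hμsum : ∀ x, ∑ a, μ x a = 1)
    (hπnonneg : ∀ x a, 0 ≤ π x a) (hπsum : ∀ x, ∑ a, π x a = 1)
    (r Q : S → Fin K → ℝ)
    (Z : S → Fin K → ℝ)
    (hZ : ∀ x a, Z x a = π x a / μ x a * (r x a - Q x a)
        + ∑ b, π x b * Q x b)
    (Vπ : S → ℝ) (hV : ∀ x, Vπ x = ∑ a, π x a * r x a) :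
    jointExpec p μ (fun x a => (Z x a - jointExpec p μ Z) ^ 2)
      = (∑ x, p x * (Vπ x - ∑ y, p y * Vπ y) ^ 2)
        + ∑ x, p x *
            semiNormSq (μ x) (fun a => π x a * r x a - π x a * Q x a) := by
  classical
  set v : S → Fin K → ℝ := fun x a => π x a * r x a - π x a * Q x a with hv
  -- conditional mean
  have hmean : ∀ x, ∑ a, μ x a * Z x a = Vπ x := by
    intro x
    have : ∀ a, μ x a * Z x a = π x a * (r x a - Q x a) + μ x a * (∑ b, π x b * Q x b) := by
      intro a
      rw [hZ]
      field_simp [(hμpos x a).ne']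
    simp_rw [this]
    rw [Finset.sum_add_distrib, ← Finset.sum_mul, hμsum, hV]
    simp_rw [mul_sub]
    rw [Finset.sum_sub_distrib]
    ring
  -- joint mean
  have hjm : jointExpec p μ Z = ∑ y, p y * Vπ y := by
    unfold jointExpec
    exact Finset.sum_congr rfl fun x _ => by rw [hmean x]
  -- conditional variance
  have hcvar : ∀ x, ∑ a, μ x a * (Z x a - Vπ x) ^ 2 = semiNormSq (μ x) (v x) := by
    intro x
    have hzv : ∀ a, Z x a - Vπ x = v x a / μ x a - ∑ b, v x b := by
      intro a
      rw [hZ, hV, hv]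
      simp only
      rw [Finset.sum_sub_distrib]
      field_simp [(hμpos x a).ne']
      ring
    have : ∀ a, μ x a * (Z x a - Vπ x) ^ 2
        = v x a ^ 2 / μ x a - 2 * (∑ b, v x b) * v x a + (∑ b, v x b) ^ 2 * μ x a := by
      intro a
      rw [hzv a]
      field_simp [(hμpos x a).ne']
      ring
    simp_rw [this]
    rw [Finset.sum_add_distrib, Finset.sum_sub_distrib, ← Finset.mul_sum, ← Finset.mul_sum,
      hμsum, semiNormSq]
    ring
  -- put together
  rw [hjm]
  unfold jointExpec
  have key : ∀ x, ∑ a, μ x a * (Z x a - ∑ y, p y * Vπ y) ^ 2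
      = (Vπ x - ∑ y, p y * Vπ y) ^ 2 + semiNormSq (μ x) (v x) := by
    intro x
    set M := ∑ y, p y * Vπ y with hM
    have expand : ∀ a, μ x a * (Z x a - M) ^ 2
        = μ x a * (Z x a - Vπ x) ^ 2 + 2 * (Vπ x - M) * (μ x a * Z x a - μ x a * Vπ x)
          + (Vπ x - M) ^ 2 * μ x a := by
      intro a; ring
    simp_rw [expand]
    rw [Finset.sum_add_distrib, Finset.sum_add_distrib, ← Finset.mul_sum, ← Finset.mul_sum,
      Finset.sum_sub_distrib, hmean x, ← Finset.sum_mul, hμsum, hcvar x]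
    ring
  calc ∑ x, p x * ∑ a, μ x a * (Z x a - ∑ y, p y * Vπ y) ^ 2
      = ∑ x, (p x * (Vπ x - ∑ y, p y * Vπ y) ^ 2
          + p x * semiNormSq (μ x) (v x)) := by
        refine Finset.sum_congr rfl fun x _ => ?_
        rw [key x]; ring
    _ = _ := by rw [Finset.sum_add_distrib]
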